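/- Let {R_i} be a finite collection of finite sets of positive integers such that for every i ≥ 1 and every positive integer α, the number of elements of R_i that are ≥ α is at least the number of elements of R_{i+1} that are ≥ α. Then there exists exactly one semi-skyline augmented filling whose set of entries in row i equals R_i for every i. -/

import Mathlib

/-- Indicator `I(x,y) = 1` if `x > y`, else `0`. -/
def ind (x y : ℕ) : ℤ := if y < x then 1 else 0

/-- A semi-skyline augmented filling (SSAF) of a weak composition.
Columns are indexed by positive integers (column 0 is unused and empty);
`shape i` is the number of non-basement cells of column `i`; `entry i j`
is the entry in column `i`, row `j`, with row `0` the basement (entry `i`),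
and `entry i j = 0` for cells outside the augmented diagram. -/
structure SSAF where
  shape : ℕ → ℕ
  entry : ℕ → ℕ → ℕ
  shape_zero : shape 0 = 0
  support : ∃ N, ∀ i, N ≤ i → shape i = 0
  basement : ∀ i, entry i 0 = i
  pos : ∀ i j, 1 ≤ j → j ≤ shape i → 1 ≤ entry i j
  zero_outside : ∀ i j, shape i < j → entry i j = 0
  noDescent : ∀ i j, j + 1 ≤ shape i → entry i (j + 1) ≤ entry i j
  typeA : ∀ i1 i2 j, i1 < i2 → shape i2 ≤ shape i1 → 1 ≤ j → j ≤ shape i2 →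
    ind (entry i1 j) (entry i2 j) + ind (entry i2 j) (entry i1 (j - 1))
      - ind (entry i1 j) (entry i1 (j - 1)) = 1
  typeB : ∀ i1 i2 j, i1 < i2 → shape i1 < shape i2 → j ≤ shape i1 → j + 1 ≤ shape i2 →
    ind (entry i2 (j + 1)) (entry i1 j) + ind (entry i1 j) (entry i2 j)
      - ind (entry i2 (j + 1)) (entry i2 j) = 1

/-- The set of entries appearing in row `j ≥ 1` of a semi-skyline augmented filling. -/
def SSAF.rowSet (F : SSAF) (j : ℕ) : Set ℕ :=
  {v | ∃ i, j ≤ F.shape i ∧ F.entry i j = v}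

/-- Given a finite collection of finite sets `R i` of positive integers
(rows indexed from 1) such that for all `i ≥ 1` and all `α`, the number of elements of
`R (i+1)` that are `≥ α` is at most the number of elements of `R i` that are `≥ α`,
there is exactly one semi-skyline augmented filling whose set of row-`i` entries is
`R i` for every `i ≥ 1`. -/

noncomputable def greedy (prev : ℕ → ℕ) : List ℕ → ℕ → ℕ
  | [] => fun _ => 0
  | x :: xs => fun i =>
      if i = sInf {i | x ≤ prev i} then x
      else greedy (Function.update prev (sInf {i | x ≤ prev i}) 0) xs i

theorem greedy_spec (L : List ℕ) : ∀ (prev : ℕ → ℕ) (V : Finset ℕ),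
    L.Pairwise (· > ·) → (∀ x ∈ L, 1 ≤ x) →
    (∀ v ∈ V, ∃ i, prev i = v) →
    (∀ i i', prev i ≠ 0 → prev i = prev i' → i = i') →
    (∀ i, prev i ≠ 0 → prev i ∈ V) →
    (∀ x ∈ L, (L.filter (x ≤ ·)).length ≤ (V.filter (x ≤ ·)).card) →
    (∀ i, greedy prev L i ≠ 0 → greedy prev L i ≤ prev i ∧ greedy prev L i ∈ L) ∧
    (∀ x ∈ L, ∃ i, greedy prev L i = x) ∧
    (∀ i i', greedy prev L i ≠ 0 → greedy prev L i = greedy prev L i' → i = i') ∧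
    (∀ i i', i < i' → greedy prev L i' ≠ 0 → greedy prev L i' ≤ prev i →
       greedy prev L i' < greedy prev L i) := by
  induction L with
  | nil => intro prev V _ _ _ _ _ _; simp [greedy]
  | cons x xs IH =>
    intro prev V hsort hpos hsurj hinj hmem hcount
    have hx1 : 1 ≤ x := hpos x (by simp)
    have hxgt : ∀ y ∈ xs, y < x := fun y hy => List.rel_of_pairwise_cons hsort hy
    have hne : {i | x ≤ prev i}.Nonempty := by
      have h2 := hcount x (by simp)
      have h3 : 0 < ((x :: xs).filter (x ≤ ·)).length := by
        refine List.length_pos_iff.mpr ?_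
        intro h
        have : x ∈ (x :: xs).filter (x ≤ ·) := by simp
        rw [h] at this; exact absurd this List.not_mem_nil
      have h1 : 0 < (V.filter (x ≤ ·)).card := by omega
      obtain ⟨v, hv⟩ := Finset.card_pos.mp h1
      obtain ⟨hvV, hxv⟩ := Finset.mem_filter.mp hv
      obtain ⟨i, hi⟩ := hsurj v hvV
      exact ⟨i, show x ≤ prev i from hi ▸ hxv⟩
    have hcmem : x ≤ prev (sInf {i | x ≤ prev i}) := Nat.sInf_mem hne
    set c := sInf {i | x ≤ prev i} with hc
    have hcmin : ∀ i, i < c → ¬ x ≤ prev i := by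
      intro i hi hx'
      have h := Nat.sInf_le (show i ∈ {i | x ≤ prev i} from hx')
      rw [← hc] at h
      omega
    have hpc0 : prev c ≠ 0 := by omega
    set prev' := Function.update prev c 0 with hprev'
    have hprev'_c : prev' c = 0 := Function.update_self c 0 prev
    have hprev'_eq : ∀ i, i ≠ c → prev' i = prev i := by
      intro i h
      exact Function.update_of_ne h 0 prev
    have hprev'_le : ∀ i, prev' i ≤ prev i := by
      intro i
      by_cases h : i = c
      · rw [h, hprev'_c]; omega
      · rw [hprev'_eq i h]
    set V' := V.erase (prev c) with hV'
    have hsurj' : ∀ v ∈ V', ∃ i, prev' i = v := by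
      intro v hv
      obtain ⟨hvne, hvV⟩ := Finset.mem_erase.mp hv
      obtain ⟨i, hi⟩ := hsurj v hvV
      have hic : i ≠ c := fun h => hvne (by rw [← hi, h])
      exact ⟨i, by rw [hprev'_eq i hic, hi]⟩
    have hinj' : ∀ i i', prev' i ≠ 0 → prev' i = prev' i' → i = i' := by
      intro i i' h1 h2
      have hic : i ≠ c := fun h => h1 (h ▸ hprev'_c)
      have hi'c : i' ≠ c := fun h => by
        rw [h, hprev'_c] at h2; exact h1 h2
      exact hinj i i' (by rwa [hprev'_eq i hic] at h1)
        (by rwa [hprev'_eq i hic, hprev'_eq i' hi'c] at h2)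
    have hmem' : ∀ i, prev' i ≠ 0 → prev' i ∈ V' := by
      intro i h1
      have hic : i ≠ c := fun h => h1 (h ▸ hprev'_c)
      rw [hprev'_eq i hic] at h1 ⊢
      refine Finset.mem_erase.mpr ⟨fun h => ?_, hmem i h1⟩
      exact hic (hinj i c h1 h)
    have hcount' : ∀ y ∈ xs, (xs.filter (y ≤ ·)).length ≤ (V'.filter (y ≤ ·)).card := by
      intro y hy
      have hyx : y < x := hxgt y hy
      have h1 := hcount y (by simp [hy])
      have hfL : ((x :: xs).filter (y ≤ ·)).length = (xs.filter (y ≤ ·)).length + 1 := by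
        simp [List.filter_cons, hyx.le]
      have hpcV : prev c ∈ V.filter (y ≤ ·) :=
        Finset.mem_filter.mpr ⟨hmem c hpc0, by omega⟩
      have hfV : (V'.filter (y ≤ ·)).card = (V.filter (y ≤ ·)).card - 1 := by
        rw [hV', Finset.filter_erase, Finset.card_erase_of_mem hpcV]
      have h4 : 0 < (V.filter (y ≤ ·)).card := Finset.card_pos.mpr ⟨_, hpcV⟩
      omega
    obtain ⟨P1, P2, P3, P4⟩ := IH prev' V' hsort.of_cons (fun y hy => hpos y (by simp [hy]))
      hsurj' hinj' hmem' hcount'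
    have hgc : greedy prev (x :: xs) c = x := by rw [greedy]; simp [← hc]
    have hgnc : ∀ i, i ≠ c → greedy prev (x :: xs) i = greedy prev' xs i := by
      intro i h; rw [greedy]; simp [← hc, h, ← hprev']
    refine ⟨?_, ?_, ?_, ?_⟩
    · intro i h
      by_cases hic : i = c
      · subst hic; rw [hgc]; exact ⟨hcmem, by simp⟩
      · rw [hgnc i hic] at h ⊢
        obtain ⟨h1, h2⟩ := P1 i h
        exact ⟨h1.trans (hprev'_le i), by simp [h2]⟩
    · intro y hy
      rcases List.mem_cons.mp hy with rfl | hy'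
      · exact ⟨c, hgc⟩
      · obtain ⟨i, hi⟩ := P2 y hy'
        have hy1 : 1 ≤ y := hpos y (by simp [hy'])
        have hne0 : greedy prev' xs i ≠ 0 := by rw [hi]; omega
        have hile := (P1 i hne0).1
        have hic : i ≠ c := by
          intro h; rw [h, hprev'_c] at hile; rw [h] at hne0; omega
        exact ⟨i, by rw [hgnc i hic]; exact hi⟩
    · intro i i' h1 h2
      by_cases hic : i = c <;> by_cases hi'c : i' = c
      · rw [hic, hi'c]
      · exfalso
        rw [hic, hgc] at h1 h2
        rw [hgnc i' hi'c] at h2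
        have := (P1 i' (by omega)).2
        rw [← h2] at this
        exact absurd (hxgt x this) (lt_irrefl x)
      · exfalso
        rw [hi'c, hgc] at h2
        rw [hgnc i hic] at h1 h2
        have := (P1 i h1).2
        rw [h2] at this
        exact absurd (hxgt x this) (lt_irrefl x)
      · rw [hgnc i hic] at h1 h2
        rw [hgnc i' hi'c] at h2
        exact P3 i i' h1 h2
    · intro i i' hii' h1 h2
      by_cases hi'c : i' = c
      · exfalso
        rw [hi'c, hgc] at h2
        exact hcmin i (hi'c ▸ hii') h2
      · rw [hgnc i' hi'c] at h1 h2 ⊢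
        have hlt : greedy prev' xs i' < x := hxgt _ (P1 i' h1).2
        by_cases hic : i = c
        · rw [hic, hgc]; exact hlt
        · rw [hgnc i hic]
          exact P4 i i' hii' h1 (by rwa [hprev'_eq i hic])

noncomputable def rowsAux (R : ℕ → Finset ℕ) (B : ℕ) : ℕ → ℕ → ℕ
  | 0 => fun i => if i ≤ B then i else 0
  | j+1 => greedy (rowsAux R B j) (((R (j+1)).sort (· ≤ ·)).reverse)

noncomputable def vals (R : ℕ → Finset ℕ) (B : ℕ) (j : ℕ) : Finset ℕ :=
  if j = 0 then Finset.Icc 1 B else R j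

lemma sortrev_sorted (s : Finset ℕ) : ((s.sort (· ≤ ·)).reverse).Pairwise (· > ·) := by
  rw [List.pairwise_reverse]
  exact s.sortedLT_sort.pairwise

lemma sortrev_mem (s : Finset ℕ) (x : ℕ) : x ∈ (s.sort (· ≤ ·)).reverse ↔ x ∈ s := by
  rw [List.mem_reverse, Finset.mem_sort]

lemma toList_filter_length (s : Finset ℕ) (x : ℕ) :
    ((s.toList).filter (fun y => decide (x ≤ y))).length = (s.filter (x ≤ ·)).card := by
  have h1 : (↑((s.toList).filter (fun y => decide (x ≤ y))) : Multiset ℕ)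
      = Multiset.filter (x ≤ ·) ↑s.toList := rfl
  have h2 := congrArg Multiset.card h1
  rw [Multiset.coe_card] at h2
  rw [h2, Finset.toList, Multiset.coe_toList]
  rfl

lemma sortrev_filter_length (s : Finset ℕ) (x : ℕ) :
    (((s.sort (· ≤ ·)).reverse).filter (fun y => decide (x ≤ y))).length
      = (s.filter (x ≤ ·)).card := by
  have hperm : List.Perm ((s.sort (· ≤ ·)).reverse) s.toList :=
    (List.reverse_perm _).trans (Finset.sort_perm_toList _ _)
  rw [(hperm.filter _).length_eq, toList_filter_length]

section
variable (R : ℕ → Finset ℕ) (B : ℕ)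

/-- invariant for a single row -/
def I3 (j : ℕ) : Prop :=
  (∀ i, rowsAux R B j i ≠ 0 → rowsAux R B j i ∈ vals R B j) ∧
  (∀ v ∈ vals R B j, ∃ i, rowsAux R B j i = v) ∧
  (∀ i i', rowsAux R B j i ≠ 0 → rowsAux R B j i = rowsAux R B j i' → i = i')

variable (hposR : ∀ j, ∀ x ∈ R j, 1 ≤ x)
  (hBR : ∀ j, ∀ x ∈ R j, x ≤ B)
  (hdom : ∀ j, 1 ≤ j → ∀ α : ℕ,
      ((R (j + 1)).filter (fun x => α ≤ x)).card ≤ ((R j).filter (fun x => α ≤ x)).card)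

include hposR hBR hdom in
lemma step_spec (j : ℕ) (h3 : I3 R B j) :
    (∀ i, rowsAux R B (j+1) i ≠ 0 →
        rowsAux R B (j+1) i ≤ rowsAux R B j i ∧ rowsAux R B (j+1) i ∈ R (j+1)) ∧
    (∀ x ∈ R (j+1), ∃ i, rowsAux R B (j+1) i = x) ∧
    (∀ i i', rowsAux R B (j+1) i ≠ 0 →
        rowsAux R B (j+1) i = rowsAux R B (j+1) i' → i = i') ∧
    (∀ i i', i < i' → rowsAux R B (j+1) i' ≠ 0 → rowsAux R B (j+1) i' ≤ rowsAux R B j i →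
        rowsAux R B (j+1) i' < rowsAux R B (j+1) i) := by
  obtain ⟨hmem, hsurj, hinj⟩ := h3
  have hvals1 : ∀ x ∈ vals R B j, 1 ≤ x := by
    intro x hx
    unfold vals at hx
    split at hx
    · exact (Finset.mem_Icc.mp hx).1
    · exact hposR _ x hx
  have hcount : ∀ x ∈ ((R (j+1)).sort (· ≤ ·)).reverse,
      ((((R (j+1)).sort (· ≤ ·)).reverse).filter (x ≤ ·)).length
        ≤ ((vals R B j).filter (x ≤ ·)).card := by
    intro x hx
    rw [sortrev_filter_length]
    rcases Nat.eq_zero_or_pos j with rfl | hj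
    · unfold vals
      simp only [if_pos rfl]
      apply Finset.card_le_card
      intro y hy
      obtain ⟨hy1, hy2⟩ := Finset.mem_filter.mp hy
      exact Finset.mem_filter.mpr ⟨Finset.mem_Icc.mpr ⟨hposR _ y hy1, hBR _ y hy1⟩, hy2⟩
    · unfold vals
      rw [if_neg (by omega)]
      exact hdom j hj x
  have := greedy_spec (((R (j+1)).sort (· ≤ ·)).reverse) (rowsAux R B j) (vals R B j)
    (sortrev_sorted _)
    (fun x hx => hposR _ x ((sortrev_mem _ x).mp hx))
    hsurj hinj hmem hcount
  obtain ⟨P1, P2, P3, P4⟩ := this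
  have hr : rowsAux R B (j+1) = greedy (rowsAux R B j) (((R (j+1)).sort (· ≤ ·)).reverse) :=
    rfl
  rw [hr]
  refine ⟨?_, ?_, P3, P4⟩
  · intro i h
    obtain ⟨h1, h2⟩ := P1 i h
    exact ⟨h1, (sortrev_mem _ _).mp h2⟩
  · intro x hx
    exact P2 x ((sortrev_mem _ x).mpr hx)

include hposR hBR hdom in
lemma rows_inv : ∀ j, I3 R B j := by
  intro j
  induction j with
  | zero =>
    refine ⟨?_, ?_, ?_⟩
    · intro i h
      show rowsAux R B 0 i ∈ vals R B 0
      unfold rowsAux vals at *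
      rw [if_pos rfl]
      by_cases hiB : i ≤ B
      · rw [if_pos hiB] at h ⊢
        exact Finset.mem_Icc.mpr ⟨by omega, hiB⟩
      · rw [if_neg hiB] at h
        omega
    · intro v hv
      unfold vals at hv
      rw [if_pos rfl] at hv
      obtain ⟨h1, h2⟩ := Finset.mem_Icc.mp hv
      exact ⟨v, by unfold rowsAux; rw [if_pos h2]⟩
    · intro i i' h1 h2
      unfold rowsAux at h1 h2
      by_cases hiB : i ≤ B
      · rw [if_pos hiB] at h1 h2
        by_cases hi'B : i' ≤ B
        · rwa [if_pos hi'B] at h2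
        · rw [if_neg hi'B] at h2
          omega
      · rw [if_neg hiB] at h1
        omega
  | succ j IH =>
    obtain ⟨Q1, Q2, Q3, _⟩ := step_spec R B hposR hBR hdom j IH
    refine ⟨?_, ?_, Q3⟩
    · intro i h
      unfold vals
      rw [if_neg (by omega)]
      exact (Q1 i h).2
    · intro v hv
      unfold vals at hv
      rw [if_neg (by omega)] at hv
      exact Q2 v hv
end

section
variable (R : ℕ → Finset ℕ) (B M : ℕ)

noncomputable def shapeF (i : ℕ) : ℕ := sInf {n | rowsAux R B (n+1) i = 0}

noncomputable def entryF (i j : ℕ) : ℕ := if j = 0 then i else rowsAux R B j i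

variable (hposR : ∀ j, ∀ x ∈ R j, 1 ≤ x)
  (hBR : ∀ j, ∀ x ∈ R j, x ≤ B)
  (hdom : ∀ j, 1 ≤ j → ∀ α : ℕ,
      ((R (j + 1)).filter (fun x => α ≤ x)).card ≤ ((R j).filter (fun x => α ≤ x)).card)
  (hM : ∀ j, M ≤ j → R j = ∅)

include hposR hBR hdom in
lemma rows_step (j : ℕ) :
    (∀ i, rowsAux R B (j+1) i ≠ 0 →
        rowsAux R B (j+1) i ≤ rowsAux R B j i ∧ rowsAux R B (j+1) i ∈ R (j+1)) ∧
    (∀ x ∈ R (j+1), ∃ i, rowsAux R B (j+1) i = x) ∧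
    (∀ i i', rowsAux R B (j+1) i ≠ 0 →
        rowsAux R B (j+1) i = rowsAux R B (j+1) i' → i = i') ∧
    (∀ i i', i < i' → rowsAux R B (j+1) i' ≠ 0 → rowsAux R B (j+1) i' ≤ rowsAux R B j i →
        rowsAux R B (j+1) i' < rowsAux R B (j+1) i) :=
  step_spec R B hposR hBR hdom j (rows_inv R B hposR hBR hdom j)

include hposR hBR hdom in
lemma rows_pos (j i : ℕ) (hj : 1 ≤ j) (h : rowsAux R B j i ≠ 0) : rowsAux R B j i ∈ R j := by
  obtain ⟨j', rfl⟩ : ∃ j', j = j' + 1 := ⟨j - 1, by omega⟩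
  exact ((rows_step R B hposR hBR hdom j').1 i h).2

include hposR hBR hdom in
lemma rows_zero_mono {j j' i : ℕ} (hjj' : j ≤ j') (h : rowsAux R B j i = 0) :
    rowsAux R B j' i = 0 := by
  induction j' with
  | zero => rw [Nat.le_zero.mp hjj'] at h; exact h
  | succ k IH =>
    rcases Nat.lt_or_ge j (k+1) with hlt | hge
    · have hk : rowsAux R B k i = 0 := IH (by omega)
      by_contra hne
      have := ((rows_step R B hposR hBR hdom k).1 i hne).1
      have hpos1 := hposR _ _ ((rows_step R B hposR hBR hdom k).1 i hne).2
      omega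
    · rw [show j = k + 1 by omega] at h; exact h

include hposR hBR hdom in
lemma col_le_B {j i : ℕ} (hj : 1 ≤ j) (h : rowsAux R B j i ≠ 0) : 1 ≤ i ∧ i ≤ B := by
  have h1 : rowsAux R B 1 i ≠ 0 := by
    intro h0
    exact h (rows_zero_mono R B hposR hBR hdom hj h0)
  have h2 := ((rows_step R B hposR hBR hdom 0).1 i h1).1
  have h3 := hposR _ _ ((rows_step R B hposR hBR hdom 0).1 i h1).2
  simp only [Nat.zero_add] at h2 h3
  have hprev0 : rowsAux R B 0 i = if i ≤ B then i else 0 := rfl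
  rw [hprev0] at h2
  by_cases hiB : i ≤ B
  · rw [if_pos hiB] at h2; exact ⟨by omega, hiB⟩
  · rw [if_neg hiB] at h2; omega

include hM in
lemma shape_nonempty (i : ℕ) : {n | rowsAux R B (n+1) i = 0}.Nonempty := by
  refine ⟨M, ?_⟩
  show rowsAux R B (M+1) i = 0
  show greedy (rowsAux R B M) (((R (M+1)).sort (· ≤ ·)).reverse) i = 0
  rw [hM (M+1) (by omega)]
  simp [greedy]

include hposR hBR hdom hM in
lemma shape_spec (i j : ℕ) (hj : 1 ≤ j) :
    j ≤ shapeF R B i ↔ rowsAux R B j i ≠ 0 := by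
  constructor
  · intro h hz
    have : j - 1 ∉ {n | rowsAux R B (n+1) i = 0} := by
      intro hmem
      have := Nat.sInf_le hmem
      unfold shapeF at h
      omega
    apply this
    show rowsAux R B (j - 1 + 1) i = 0
    rwa [show j - 1 + 1 = j by omega]
  · intro h
    by_contra hlt
    have h1 : shapeF R B i < j := by omega
    have h2 := Nat.sInf_mem (shape_nonempty R B M hM i)
    have h3 : rowsAux R B (shapeF R B i + 1) i = 0 := h2
    exact h (rows_zero_mono R B hposR hBR hdom (by omega) h3)

omit hposR hBR hdom hM in
lemma shape_zero_of (i : ℕ) (h : rowsAux R B 1 i = 0) : shapeF R B i = 0 :=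
  Nat.sInf_eq_zero.mpr (Or.inl h)

include hposR hBR hdom hM in
lemma shape_big (i : ℕ) (h : B < i) : shapeF R B i = 0 := by
  apply shape_zero_of R B
  by_contra hne
  have := col_le_B R B hposR hBR hdom (le_refl 1) hne
  omega
end

section
variable (R : ℕ → Finset ℕ) (B M : ℕ)
variable (hposR : ∀ j, ∀ x ∈ R j, 1 ≤ x)
  (hBR : ∀ j, ∀ x ∈ R j, x ≤ B)
  (hdom : ∀ j, 1 ≤ j → ∀ α : ℕ,
      ((R (j + 1)).filter (fun x => α ≤ x)).card ≤ ((R j).filter (fun x => α ≤ x)).card)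
  (hM : ∀ j, M ≤ j → R j = ∅)

omit hposR hBR hdom hM in
lemma entryF_pos (i j : ℕ) (hj : 1 ≤ j) : entryF R B i j = rowsAux R B j i := by
  unfold entryF; rw [if_neg (by omega)]

include hposR hBR hdom in
omit hM in
lemma rows_eq_entry {i : ℕ} (hi : i ≤ B) (k : ℕ) :
    rowsAux R B k i = entryF R B i k := by
  cases k with
  | zero =>
    show (if i ≤ B then i else 0) = entryF R B i 0
    rw [if_pos hi]; rfl
  | succ k => rfl

include hposR hBR hdom hM in
lemma noDescent_F (i j : ℕ) (h : j + 1 ≤ shapeF R B i) :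
    entryF R B i (j+1) ≤ entryF R B i j := by
  have hne : rowsAux R B (j+1) i ≠ 0 :=
    (shape_spec R B M hposR hBR hdom hM i (j+1) (by omega)).mp h
  have hle := ((rows_step R B hposR hBR hdom j).1 i hne).1
  have hiB := (col_le_B R B hposR hBR hdom (by omega) hne).2
  rw [entryF_pos R B i (j+1) (by omega), ← rows_eq_entry R B hposR hBR hdom hiB j]
  exact hle

include hposR hBR hdom hM in
lemma typeA_F (i1 i2 j : ℕ) (h12 : i1 < i2) (hs : shapeF R B i2 ≤ shapeF R B i1)
    (hj1 : 1 ≤ j) (hjs : j ≤ shapeF R B i2) :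
    ind (entryF R B i1 j) (entryF R B i2 j) + ind (entryF R B i2 j) (entryF R B i1 (j - 1))
      - ind (entryF R B i1 j) (entryF R B i1 (j - 1)) = 1 := by
  obtain ⟨k, rfl⟩ : ∃ k, j = k + 1 := ⟨j - 1, by omega⟩
  simp only [Nat.add_sub_cancel]
  have hb : rowsAux R B (k+1) i2 ≠ 0 :=
    (shape_spec R B M hposR hBR hdom hM i2 (k+1) (by omega)).mp hjs
  have ha : rowsAux R B (k+1) i1 ≠ 0 :=
    (shape_spec R B M hposR hBR hdom hM i1 (k+1) (by omega)).mp (le_trans hjs hs)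
  have hi2B := (col_le_B R B hposR hBR hdom (by omega) hb).2
  have hi1B : i1 ≤ B := by omega
  have hprev : rowsAux R B k i1 = entryF R B i1 k := rows_eq_entry R B hposR hBR hdom hi1B k
  have hac : rowsAux R B (k+1) i1 ≤ entryF R B i1 k := by
    rw [← hprev]; exact ((rows_step R B hposR hBR hdom k).1 i1 ha).1
  have hne : rowsAux R B (k+1) i1 ≠ rowsAux R B (k+1) i2 := by
    intro h
    exact absurd ((rows_inv R B hposR hBR hdom (k+1)).2.2 i1 i2 ha h) (by omega)
  have hkey : rowsAux R B (k+1) i2 ≤ entryF R B i1 k →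
      rowsAux R B (k+1) i2 < rowsAux R B (k+1) i1 := by
    intro hbc
    exact (rows_step R B hposR hBR hdom k).2.2.2 i1 i2 h12 hb (by rwa [hprev])
  rw [entryF_pos R B i1 (k+1) (by omega), entryF_pos R B i2 (k+1) (by omega)]
  unfold ind
  split_ifs <;> omega

include hposR hBR hdom hM in
lemma typeB_F (i1 i2 j : ℕ) (h12 : i1 < i2) (hs : shapeF R B i1 < shapeF R B i2)
    (hj1 : j ≤ shapeF R B i1) (hj2 : j + 1 ≤ shapeF R B i2) :
    ind (entryF R B i2 (j + 1)) (entryF R B i1 j) + ind (entryF R B i1 j) (entryF R B i2 j)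
      - ind (entryF R B i2 (j + 1)) (entryF R B i2 j) = 1 := by
  have hb' : rowsAux R B (j+1) i2 ≠ 0 :=
    (shape_spec R B M hposR hBR hdom hM i2 (j+1) (by omega)).mp hj2
  have hi2B := (col_le_B R B hposR hBR hdom (by omega) hb').2
  have hi1B : i1 ≤ B := by omega
  -- b' ≤ b
  have hbb : entryF R B i2 (j+1) ≤ entryF R B i2 j := noDescent_F R B M hposR hBR hdom hM i2 j hj2
  -- key: ¬ (b' ≤ a ∧ a ≤ b)
  have hkey : ¬ (entryF R B i2 (j+1) ≤ entryF R B i1 j) := by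
    intro hba
    -- upward induction
    have hup : ∀ k, j + 1 ≤ k → k ≤ shapeF R B i2 →
        rowsAux R B k i1 ≠ 0 ∧ rowsAux R B k i2 < rowsAux R B k i1 := by
      intro k hk
      induction k, hk using Nat.le_induction with
      | base =>
        intro hk
        have h1 : rowsAux R B (j+1) i2 ≤ rowsAux R B j i1 := by
          rw [rows_eq_entry R B hposR hBR hdom hi1B j]
          rw [← entryF_pos R B i2 (j+1) (by omega)]
          exact hba
        have h2 := (rows_step R B hposR hBR hdom j).2.2.2 i1 i2 h12 hb' h1
        exact ⟨by omega, h2⟩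
      | succ k hk IH =>
        intro hk1
        obtain ⟨hne1, hlt1⟩ := IH (by omega)
        have hb2 : rowsAux R B (k+1) i2 ≠ 0 :=
          (shape_spec R B M hposR hBR hdom hM i2 (k+1) (by omega)).mp hk1
        have h1 : rowsAux R B (k+1) i2 ≤ rowsAux R B k i2 :=
          ((rows_step R B hposR hBR hdom k).1 i2 hb2).1
        have h2 := (rows_step R B hposR hBR hdom k).2.2.2 i1 i2 h12 hb2 (by omega)
        exact ⟨by omega, h2⟩
    have := (hup (shapeF R B i2) (by omega) (le_refl _)).1
    have hcontra := (shape_spec R B M hposR hBR hdom hM i1 (shapeF R B i2) (by omega)).mpr this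
    omega
  ·
    unfold ind
    split_ifs <;> omega
end

namespace SSAF
variable (G : SSAF)

lemma entry_ne_zero {i j : ℕ} (hj : 1 ≤ j) (hjs : j ≤ G.shape i) : G.entry i j ≠ 0 := by
  have := G.pos i j hj hjs; omega

lemma shape_le_of_ne {i j : ℕ} (h : G.entry i j ≠ 0) : j ≤ G.shape i := by
  by_contra hc
  exact h (G.zero_outside i j (by omega))

/-- In any SSAF, if `i1 < i2` and column `i1` is strictly shorter than column `i2`,
then `entry i1 k < entry i2 (k+1)` whenever both cells exist. -/
lemma L1 {i1 i2 : ℕ} (h12 : i1 < i2) (hs : G.shape i1 < G.shape i2) :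
    ∀ k, k ≤ G.shape i1 → k + 1 ≤ G.shape i2 → G.entry i2 (k+1) ≤ G.entry i1 k → False := by
  intro k
  induction k with
  | zero =>
    intro h1 h2 hle
    have tB := G.typeB i1 i2 0 h12 hs h1 h2
    rw [G.basement i1] at tB hle
    rw [G.basement i2] at tB
    unfold ind at tB
    split_ifs at tB <;> omega
  | succ k IH =>
    intro h1 h2 hle
    have tB := G.typeB i1 i2 (k+1) h12 hs h1 h2
    have hd1 : G.entry i2 (k+1+1) ≤ G.entry i2 (k+1) := G.noDescent i2 (k+1) h2
    have hd2 : G.entry i1 (k+1) ≤ G.entry i1 k := G.noDescent i1 k h1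
    have hlt : G.entry i2 (k+1) < G.entry i1 (k+1) := by
      unfold ind at tB
      split_ifs at tB <;> omega
    exact IH (by omega) (by omega) (by omega)

/-- In any SSAF, the first-row entry of a nonempty column `i` is `i`. -/
lemma first_row {i : ℕ} (h : 1 ≤ G.shape i) : G.entry i 1 = i := by
  have hd : G.entry i 1 ≤ G.entry i 0 := G.noDescent i 0 h
  rw [G.basement i] at hd
  have hp : 1 ≤ G.entry i 1 := G.pos i 1 le_rfl h
  by_contra hne
  have hvi : G.entry i 1 < i := by omega
  set v := G.entry i 1 with hv
  rcases le_or_gt (G.shape i) (G.shape v) with hss | hss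
  · have tA := G.typeA v i 1 hvi hss le_rfl h
    have hd2 : G.entry v 1 ≤ G.entry v 0 := G.noDescent v 0 (le_trans h hss)
    rw [G.basement v] at hd2
    have e0 : G.entry v (1 - 1) = v := by
      rw [show (1:ℕ) - 1 = 0 from rfl, G.basement v]
    rw [e0] at tA
    unfold ind at tA
    split_ifs at tA <;> omega
  · exact G.L1 hvi hss 0 (by omega) h (by rw [G.basement v])

/-- In any SSAF, entries within a row are distinct. -/
lemma row_inj {i1 i2 j : ℕ} (hj : 1 ≤ j) (h1 : j ≤ G.shape i1) (h2 : j ≤ G.shape i2)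
    (he : G.entry i1 j = G.entry i2 j) : i1 = i2 := by
  by_contra hne
  wlog h12 : i1 < i2 generalizing i1 i2
  · exact this h2 h1 he.symm (Ne.symm hne) (by omega)
  rcases le_or_gt (G.shape i2) (G.shape i1) with hss | hss
  · have tA := G.typeA i1 i2 j h12 hss hj h2
    rw [he] at tA
    unfold ind at tA
    split_ifs at tA <;> omega
  · have hd : G.entry i2 (j+1) ≤ G.entry i2 j := G.noDescent i2 j (by omega)
    exact G.L1 h12 hss j h1 (by omega) (by omega)

lemma ext' (F : SSAF) (h1 : G.shape = F.shape) (h2 : G.entry = F.entry) : G = F := by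
  cases G; cases F
  cases h1; cases h2
  rfl

end SSAF

section
variable (R : ℕ → Finset ℕ) (B M : ℕ)
variable (hposR : ∀ j, ∀ x ∈ R j, 1 ≤ x)
  (hBR : ∀ j, ∀ x ∈ R j, x ≤ B)
  (hdom : ∀ j, 1 ≤ j → ∀ α : ℕ,
      ((R (j + 1)).filter (fun x => α ≤ x)).card ≤ ((R j).filter (fun x => α ≤ x)).card)
  (hM : ∀ j, M ≤ j → R j = ∅)

include hposR hBR hdom hM in
lemma G_rows (G : SSAF) (hG : ∀ j, 1 ≤ j → G.rowSet j = ↑(R j)) :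
    ∀ j, ∀ i, G.entry i j = entryF R B i j := by
  have hrow : ∀ j v, 1 ≤ j → (v ∈ R j ↔ ∃ i, j ≤ G.shape i ∧ G.entry i j = v) := by
    intro j v hj
    rw [← Finset.mem_coe, ← hG j hj]
    exact Iff.rfl
  intro j
  induction j with
  | zero => intro i; rw [G.basement i]; rfl
  | succ j IH =>
    have hmain : ∀ k x, B < x + k → x ∈ R (j+1) → ∀ i, j+1 ≤ G.shape i →
        G.entry i (j+1) = x → rowsAux R B (j+1) i = x := by
      intro k
      induction k with
      | zero =>
        intro x hx hxR
        exact absurd (hBR _ x hxR) (by omega)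
      | succ k IHk =>
        intro x hxk hxR i his hie
        have hx1 : 1 ≤ x := hposR _ x hxR
        obtain ⟨iF, hiF⟩ := (rows_step R B hposR hBR hdom j).2.1 x hxR
        have hiFne : rowsAux R B (j+1) iF ≠ 0 := by rw [hiF]; omega
        have hiFB := (col_le_B R B hposR hBR hdom (by omega) hiFne).2
        rcases lt_trichotomy i iF with hlt | heq | hgt
        · exfalso
          have hxp : x ≤ rowsAux R B j i := by
            have h1 : G.entry i (j+1) ≤ G.entry i j := G.noDescent i j his
            rw [hie, IH i] at h1
            rcases Nat.eq_zero_or_pos j with rfl | hj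
            · have h0 : rowsAux R B 0 i = if i ≤ B then i else 0 := rfl
              rw [h0, if_pos (by omega)]
              exact h1
            · rwa [entryF_pos R B i j hj] at h1
          have hP4 := (rows_step R B hposR hBR hdom j).2.2.2 i iF hlt
            (by rw [hiF]; omega) (by rw [hiF]; exact hxp)
          rw [hiF] at hP4
          have hyne : rowsAux R B (j+1) i ≠ 0 := by omega
          have hyR : rowsAux R B (j+1) i ∈ R (j+1) :=
            rows_pos R B hposR hBR hdom (j+1) i (by omega) hyne
          obtain ⟨iy, hys, hye⟩ := (hrow (j+1) _ (by omega)).mp hyR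
          have hrowsy := IHk (rowsAux R B (j+1) i) (by omega) hyR iy hys hye
          have heqi := (rows_step R B hposR hBR hdom j).2.2.1 iy i
            (by rw [hrowsy]; exact hyne) hrowsy
          rw [heqi] at hye
          rw [hie] at hye
          omega
        · rw [heq]; exact hiF
        · exfalso
          have hc : x ≤ G.entry iF j := by
            have h1 : rowsAux R B (j+1) iF ≤ rowsAux R B j iF :=
              ((rows_step R B hposR hBR hdom j).1 iF hiFne).1
            rw [hiF] at h1
            rw [IH iF, ← rows_eq_entry R B hposR hBR hdom hiFB j]
            exact h1
          have hjsF : j ≤ G.shape iF := by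
            rcases Nat.eq_zero_or_pos j with rfl | hj
            · omega
            · apply G.shape_le_of_ne
              omega
          rcases lt_or_ge (G.shape iF) (G.shape i) with hss | hss
          · exact G.L1 hgt hss j hjsF his (by rw [hie]; exact hc)
          · have hj1F : j+1 ≤ G.shape iF := le_trans his hss
            have hy1 : 1 ≤ G.entry iF (j+1) := G.pos iF (j+1) (by omega) hj1F
            have hyR : G.entry iF (j+1) ∈ R (j+1) :=
              (hrow (j+1) _ (by omega)).mpr ⟨iF, hj1F, rfl⟩
            have hyx : G.entry iF (j+1) ≠ x := by
              intro h
              have := G.row_inj (j := j+1) (by omega) hj1F his (by rw [h, ← hie])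
              omega
            rcases lt_or_gt_of_ne hyx with hlt2 | hgt2
            · have tA := G.typeA iF i (j+1) hgt hss (by omega) his
              have e0 : G.entry iF (j+1-1) = G.entry iF j := by norm_num
              rw [e0, hie] at tA
              unfold ind at tA
              split_ifs at tA <;> omega
            · have := IHk (G.entry iF (j+1)) (by omega) hyR iF hj1F rfl
              rw [hiF] at this
              omega
    intro i
    rcases le_or_gt (j+1) (G.shape i) with his | his
    · have hx : G.entry i (j+1) ∈ R (j+1) := (hrow (j+1) _ (by omega)).mpr ⟨i, his, rfl⟩
      have hx1 : 1 ≤ G.entry i (j+1) := hposR _ _ hx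
      have := hmain (B+1) (G.entry i (j+1)) (by omega) hx i his rfl
      rw [entryF_pos R B i (j+1) (by omega), this]
    · have h0 : G.entry i (j+1) = 0 := G.zero_outside i (j+1) (by omega)
      rw [h0, entryF_pos R B i (j+1) (by omega)]
      by_contra hne
      have hne' : rowsAux R B (j+1) i ≠ 0 := fun h => hne h.symm
      have hvR : rowsAux R B (j+1) i ∈ R (j+1) :=
        rows_pos R B hposR hBR hdom (j+1) i (by omega) hne'
      obtain ⟨i', his', hie'⟩ := (hrow (j+1) _ (by omega)).mp hvR
      have hv1 : 1 ≤ rowsAux R B (j+1) i := hposR _ _ hvR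
      have h2 := hmain (B+1) (rowsAux R B (j+1) i) (by omega) hvR i' his' hie'
      have heqi := (rows_step R B hposR hBR hdom j).2.2.1 i' i (by rw [h2]; omega) h2
      rw [heqi] at his'
      omega
end

theorem unique_ssaf_with_row_sets (R : ℕ → Finset ℕ)
    (hfin : ∃ M, ∀ i, M ≤ i → R i = ∅)
    (hpos : ∀ i, ∀ x ∈ R i, 1 ≤ x)
    (hdom : ∀ i, 1 ≤ i → ∀ α : ℕ,
      ((R (i + 1)).filter (fun x => α ≤ x)).card ≤ ((R i).filter (fun x => α ≤ x)).card) :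
    ∃! F : SSAF, ∀ j, 1 ≤ j → F.rowSet j = ↑(R j) := by
  obtain ⟨M, hM⟩ := hfin
  set B := (Finset.range M).sup (fun j => (R j).sup id) with hB
  have hBR : ∀ j, ∀ x ∈ R j, x ≤ B := by
    intro j x hx
    rcases lt_or_ge j M with hj | hj
    · calc x = id x := rfl
        _ ≤ (R j).sup id := Finset.le_sup hx
        _ ≤ B := Finset.le_sup (f := fun j => (R j).sup id) (Finset.mem_range.mpr hj)
    · rw [hM j hj] at hx
      exact absurd hx (Finset.notMem_empty x)
  have hposR : ∀ j, ∀ x ∈ R j, 1 ≤ x := hpos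
  refine ⟨⟨shapeF R B, entryF R B, ?_, ?_, ?_, ?_, ?_, ?_, ?_, ?_⟩, ?_, ?_⟩
  · -- shape_zero
    apply shape_zero_of R B
    by_contra h
    have := (col_le_B R B hposR hBR hdom le_rfl h).1
    omega
  · -- support
    exact ⟨B+1, fun i hi => shape_big R B M hposR hBR hdom hM i (by omega)⟩
  · -- basement
    exact fun i => rfl
  · -- pos
    intro i j hj hjs
    have := (shape_spec R B M hposR hBR hdom hM i j hj).mp hjs
    rw [entryF_pos R B i j hj]
    omega
  · -- zero_outside
    intro i j h
    have hj : 1 ≤ j := by omega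
    rw [entryF_pos R B i j hj]
    by_contra hne
    have := (shape_spec R B M hposR hBR hdom hM i j hj).mpr hne
    omega
  · exact noDescent_F R B M hposR hBR hdom hM
  · exact typeA_F R B M hposR hBR hdom hM
  · exact typeB_F R B M hposR hBR hdom hM
  · -- row sets
    intro j hj
    ext v
    show (∃ i, j ≤ shapeF R B i ∧ entryF R B i j = v) ↔ v ∈ (↑(R j) : Set ℕ)
    rw [Finset.mem_coe]
    constructor
    · rintro ⟨i, h1, rfl⟩
      rw [entryF_pos R B i j hj]
      exact rows_pos R B hposR hBR hdom j i hj
        ((shape_spec R B M hposR hBR hdom hM i j hj).mp h1)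
    · intro hv
      obtain ⟨i, hi⟩ := (rows_inv R B hposR hBR hdom j).2.1 v
        (by unfold vals; rw [if_neg (by omega)]; exact hv)
      have hvne : rowsAux R B j i ≠ 0 := by
        rw [hi]
        have := hpos j v hv
        omega
      exact ⟨i, (shape_spec R B M hposR hBR hdom hM i j hj).mpr hvne,
        by rw [entryF_pos R B i j hj]; exact hi⟩
  · -- uniqueness
    intro G hG
    have hge := G_rows R B M hposR hBR hdom hM G hG
    apply SSAF.ext'
    · funext i
      show G.shape i = shapeF R B i
      apply le_antisymm
      · rcases Nat.eq_zero_or_pos (G.shape i) with h0 | h1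
        · omega
        · apply (shape_spec R B M hposR hBR hdom hM i (G.shape i) h1).mpr
          have hne := G.entry_ne_zero h1 (le_refl (G.shape i))
          rwa [hge (G.shape i) i, entryF_pos R B i (G.shape i) h1] at hne
      · rcases Nat.eq_zero_or_pos (shapeF R B i) with h0 | h1
        · omega
        · apply G.shape_le_of_ne
          rw [hge (shapeF R B i) i, entryF_pos R B i _ h1]
          exact (shape_spec R B M hposR hBR hdom hM i _ h1).mp le_rfl
    · funext i j
      exact hge j i
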